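/- Suppose Γ is a minimal family for Mod_2 on an unweighted graph and the overlap matrix C = N N^T is invertible. Then the unique dual optimizer is λ* = 2 C^{-1} 𝟙 and Mod_2(Γ) = 𝟙^T C^{-1} 𝟙, where 𝟙 is the all-ones vector. -/
import Mathlib


open Matrix

/-- The `2`-modulus of the subfamily indexed by `S ⊆ ι` (unweighted graph). -/
noncomputable def mod2On {E ι : Type*} [Fintype E]
    (N : ι → E → ℝ) (S : Set ι) : ℝ :=
  sInf {x : ℝ | ∃ ρ : E → ℝ, (∀ e, 0 ≤ ρ e) ∧
    (∀ i ∈ S, 1 ≤ ∑ e, N i e * ρ e) ∧ x = ∑ e, ρ e ^ 2}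

/-- The dual objective for `p = 2`, `σ ≡ 1`:  `g(λ) = λᵀ𝟙 − (1/4) λᵀ C λ`. -/
noncomputable def dualObj2 {ι : Type*} [Fintype ι]
    (C : Matrix ι ι ℝ) (lam : ι → ℝ) : ℝ :=
  ∑ i, lam i - (1 / 4) * ∑ i, ∑ j, lam i * C i j * lam j

section aux
variable {E ι : Type*} [Fintype E] [Fintype ι]

lemma hQ_sq (N : ι → E → ℝ) (C : Matrix ι ι ℝ) (hC : ∀ i j, C i j = ∑ e, N i e * N j e)
    (lam : ι → ℝ) :
    ∑ i, ∑ j, lam i * C i j * lam j = ∑ e, (∑ i, lam i * N i e) ^ 2 := by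
  calc ∑ i, ∑ j, lam i * C i j * lam j
      = ∑ i, ∑ j, ∑ e, lam i * N i e * (lam j * N j e) := by
        refine Finset.sum_congr rfl fun i _ => Finset.sum_congr rfl fun j _ => ?_
        rw [hC, Finset.mul_sum, Finset.sum_mul]
        exact Finset.sum_congr rfl fun e _ => by ring
    _ = ∑ i, ∑ e, ∑ j, lam i * N i e * (lam j * N j e) := by
        exact Finset.sum_congr rfl fun i _ => Finset.sum_comm
    _ = ∑ e, ∑ i, ∑ j, lam i * N i e * (lam j * N j e) := Finset.sum_comm
    _ = ∑ e, (∑ i, lam i * N i e) ^ 2 := by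
        refine Finset.sum_congr rfl fun e _ => ?_
        rw [sq, Finset.sum_mul_sum]

lemma hcross (N : ι → E → ℝ) (lam : ι → ℝ) (ρ : E → ℝ) :
    ∑ i, lam i * ∑ e, N i e * ρ e = ∑ e, (∑ i, lam i * N i e) * ρ e := by
  calc ∑ i, lam i * ∑ e, N i e * ρ e
      = ∑ i, ∑ e, (lam i * N i e) * ρ e := by
        refine Finset.sum_congr rfl fun i _ => ?_
        rw [Finset.mul_sum]
        exact Finset.sum_congr rfl fun e _ => by ring
    _ = ∑ e, ∑ i, (lam i * N i e) * ρ e := Finset.sum_comm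
    _ = ∑ e, (∑ i, lam i * N i e) * ρ e := by
        exact Finset.sum_congr rfl fun e _ => (Finset.sum_mul _ _ _).symm

lemma key_id (N : ι → E → ℝ) (C : Matrix ι ι ℝ) (hC : ∀ i j, C i j = ∑ e, N i e * N j e)
    (lam : ι → ℝ) (ρ : E → ℝ) :
    ∑ e, ρ e ^ 2 = (∑ i, lam i * ∑ e, N i e * ρ e)
      - (1/4) * ∑ i, ∑ j, lam i * C i j * lam j
      + ∑ e, (ρ e - (1/2) * ∑ i, lam i * N i e) ^ 2 := by
  rw [hQ_sq N C hC, hcross, Finset.mul_sum, ← Finset.sum_sub_distrib,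
    ← Finset.sum_add_distrib]
  exact Finset.sum_congr rfl fun e _ => by ring

lemma wd (N : ι → E → ℝ) (C : Matrix ι ι ℝ) (hC : ∀ i j, C i j = ∑ e, N i e * N j e)
    (lam : ι → ℝ) (ρ : E → ℝ) (h : ∀ i, lam i ≤ lam i * ∑ e, N i e * ρ e) :
    dualObj2 C lam ≤ ∑ e, ρ e ^ 2 := by
  have h1 : ∑ i, lam i ≤ ∑ i, lam i * ∑ e, N i e * ρ e := Finset.sum_le_sum fun i _ => h i
  have h2 : (0:ℝ) ≤ ∑ e, (ρ e - (1/2) * ∑ i, lam i * N i e) ^ 2 :=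
    Finset.sum_nonneg fun e _ => sq_nonneg _
  have := key_id N C hC lam ρ
  unfold dualObj2
  linarith

lemma expand (C : Matrix ι ι ℝ) (hsymm : ∀ i j, C i j = C j i) (lam d : ι → ℝ) :
    dualObj2 C (fun i => lam i + d i) = dualObj2 C lam
      + (∑ i, d i * (1 - (1/2) * ∑ j, C i j * lam j))
      - (1/4) * ∑ i, ∑ j, d i * C i j * d j := by
  have cross : ∑ i, ∑ j, lam i * C i j * d j = ∑ i, ∑ j, d i * C i j * lam j := by
    rw [Finset.sum_comm]
    exact Finset.sum_congr rfl fun a _ => Finset.sum_congr rfl fun b _ => by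
      rw [hsymm b a]; ring
  have split : ∑ i, ∑ j, (lam i + d i) * C i j * (lam j + d j)
      = ∑ i, ∑ j, lam i * C i j * lam j + 2 * (∑ i, ∑ j, d i * C i j * lam j)
        + ∑ i, ∑ j, d i * C i j * d j := by
    have hterm : ∀ i j : ι, (lam i + d i) * C i j * (lam j + d j)
        = lam i * C i j * lam j + lam i * C i j * d j + d i * C i j * lam j
          + d i * C i j * d j := fun i j => by ring
    simp only [hterm, Finset.sum_add_distrib]
    rw [cross]; ring
  have lin : ∑ i, d i * (1 - (1/2) * ∑ j, C i j * lam j)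
      = ∑ i, d i - (1/2) * ∑ i, ∑ j, d i * C i j * lam j := by
    rw [Finset.mul_sum, ← Finset.sum_sub_distrib]
    refine Finset.sum_congr rfl fun i _ => ?_
    have : ∑ j, d i * C i j * lam j = d i * ∑ j, C i j * lam j := by
      rw [Finset.mul_sum]
      exact Finset.sum_congr rfl fun j _ => by ring
    rw [this]; ring
  unfold dualObj2
  rw [split, lin, Finset.sum_add_distrib]
  ring

lemma expand_single [DecidableEq ι] (C : Matrix ι ι ℝ) (hsymm : ∀ i j, C i j = C j i)
    (lam : ι → ℝ) (i : ι) (t : ℝ) :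
    dualObj2 C (fun j => lam j + (if j = i then t else 0))
      = dualObj2 C lam + t * (1 - (1/2) * ∑ j, C i j * lam j)
        - (1/4) * (t ^ 2 * C i i) := by
  rw [expand C hsymm lam _]
  congr 1
  · congr 1
    simp [ite_mul, zero_mul, Finset.sum_ite_eq']
  · congr 1
    simp [ite_mul, mul_ite, zero_mul, mul_zero, Finset.sum_ite_eq']
    ring

lemma Nrho (N : ι → E → ℝ) (C : Matrix ι ι ℝ) (hC : ∀ i j, C i j = ∑ e, N i e * N j e)
    (lam : ι → ℝ) (i : ι) :
    ∑ e, N i e * ((1/2) * ∑ j, lam j * N j e) = (1/2) * ∑ j, C i j * lam j := by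
  rw [Finset.mul_sum]
  calc ∑ e, N i e * ((1/2) * ∑ j, lam j * N j e)
      = ∑ e, ∑ j, (1/2) * (lam j * (N i e * N j e)) := by
        refine Finset.sum_congr rfl fun e _ => ?_
        rw [Finset.mul_sum, Finset.mul_sum]
        exact Finset.sum_congr rfl fun j _ => by ring
    _ = ∑ j, ∑ e, (1/2) * (lam j * (N i e * N j e)) := Finset.sum_comm
    _ = ∑ j, (1/2) * (C i j * lam j) := by
        refine Finset.sum_congr rfl fun j _ => ?_
        rw [hC, Finset.sum_mul, Finset.mul_sum]
        exact Finset.sum_congr rfl fun e _ => by ring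
end aux

/-- for a minimal family with invertible overlap matrix `C = NNᵀ`, the
unique dual optimizer is `λ* = 2C⁻¹𝟙` and `Mod₂(Γ) = 𝟙ᵀC⁻¹𝟙`. -/
theorem stmt14 {E ι : Type*} [Fintype E] [Fintype ι] [DecidableEq ι]
    (N : ι → E → ℝ) (hN : ∀ i e, 0 ≤ N i e) (hNz : ∀ i, N i ≠ 0)
    (C : Matrix ι ι ℝ) (hC : ∀ i j, C i j = ∑ e, N i e * N j e)
    (hCinv : IsUnit C.det)
    (hmin : ∀ i : ι, mod2On N (Set.univ \ {i}) < mod2On N (Set.univ : Set ι))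
    (lamstar : ι → ℝ)
    (hlamstar : lamstar = fun i => 2 * (C⁻¹ *ᵥ (fun _ => (1 : ℝ))) i) :
    (∀ i, 0 ≤ lamstar i) ∧
      (∀ lam : ι → ℝ, (∀ i, 0 ≤ lam i) → dualObj2 C lam ≤ dualObj2 C lamstar) ∧
      (∀ lam : ι → ℝ, (∀ i, 0 ≤ lam i) →
        (∀ lam' : ι → ℝ, (∀ i, 0 ≤ lam' i) → dualObj2 C lam' ≤ dualObj2 C lam) →
        lam = lamstar) ∧
      mod2On N (Set.univ : Set ι) = ∑ i, (C⁻¹ *ᵥ (fun _ => (1 : ℝ))) i := by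
  classical
  have hsymm : ∀ i j, C i j = C j i := fun i j => by
    rw [hC, hC]; exact Finset.sum_congr rfl fun e _ => mul_comm _ _
  have hCnn : ∀ i j, 0 ≤ C i j := fun i j => by
    rw [hC]; exact Finset.sum_nonneg fun e _ => mul_nonneg (hN i e) (hN j e)
  have hCd : ∀ i, 0 < C i i := by
    intro i
    obtain ⟨e, he⟩ : ∃ e, N i e ≠ 0 := by
      by_contra h; push_neg at h; exact hNz i (funext h)
    rw [hC]
    exact Finset.sum_pos' (fun e _ => mul_nonneg (hN i e) (hN i e))
      ⟨e, Finset.mem_univ e, mul_pos ((hN i e).lt_of_ne (Ne.symm he))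
        ((hN i e).lt_of_ne (Ne.symm he))⟩
  -- a feasible primal point
  have hspos : ∀ i, 0 < ∑ e, N i e := by
    intro i
    obtain ⟨e, he⟩ : ∃ e, N i e ≠ 0 := by
      by_contra h; push_neg at h; exact hNz i (funext h)
    exact Finset.sum_pos' (fun e _ => hN i e)
      ⟨e, Finset.mem_univ e, (hN i e).lt_of_ne (Ne.symm he)⟩
  obtain ⟨ρ₀, hρ₀0, hρ₀f⟩ : ∃ ρ : E → ℝ, (∀ e, 0 ≤ ρ e) ∧ ∀ i, 1 ≤ ∑ e, N i e * ρ e := by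
    set t : ℝ := ∑ i, 1 / (∑ e, N i e) with ht
    have htn : ∀ e : E, (0:ℝ) ≤ t :=
      fun _ => Finset.sum_nonneg fun i _ => one_div_nonneg.mpr (hspos i).le
    refine ⟨fun _ => t, htn, fun i => ?_⟩
    have h1 : 1 / (∑ e, N i e) ≤ t := by
      rw [ht]
      exact Finset.single_le_sum (f := fun i => 1 / (∑ e, N i e))
        (fun j _ => one_div_nonneg.mpr (hspos j).le) (Finset.mem_univ i)
    have h2 : ∑ e, N i e * t = (∑ e, N i e) * t := (Finset.sum_mul _ _ _).symm
    rw [h2]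
    calc (1:ℝ) = (∑ e, N i e) * (1 / (∑ e, N i e)) := by
          rw [mul_one_div, div_self (ne_of_gt (hspos i))]
      _ ≤ (∑ e, N i e) * t := by
          exact mul_le_mul_of_nonneg_left h1 (le_of_lt (hspos i))
  -- primal sets
  have hbdd : ∀ S : Set ι, BddBelow {x : ℝ | ∃ ρ : E → ℝ, (∀ e, 0 ≤ ρ e) ∧
      (∀ i ∈ S, 1 ≤ ∑ e, N i e * ρ e) ∧ x = ∑ e, ρ e ^ 2} := by
    intro S
    refine ⟨0, ?_⟩
    rintro x ⟨ρ, h0, hf, rfl⟩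
    exact Finset.sum_nonneg fun e _ => sq_nonneg _
  have hne : ∀ S : Set ι, Set.Nonempty {x : ℝ | ∃ ρ : E → ℝ, (∀ e, 0 ≤ ρ e) ∧
      (∀ i ∈ S, 1 ≤ ∑ e, N i e * ρ e) ∧ x = ∑ e, ρ e ^ 2} := by
    intro S
    exact ⟨_, ρ₀, hρ₀0, fun i _ => hρ₀f i, rfl⟩
  -- choice of R
  obtain ⟨R, hR0, hRbig⟩ : ∃ R : ℝ, 0 < R ∧ ∀ i, 2 / C i i < R := by
    refine ⟨1 + ∑ i, 2 / C i i, ?_, ?_⟩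
    · have : (0:ℝ) ≤ ∑ i, 2 / C i i :=
        Finset.sum_nonneg fun i _ => le_of_lt (div_pos two_pos (hCd i))
      linarith
    · intro i
      have h1 : 2 / C i i ≤ ∑ j, 2 / C j j := by
        exact Finset.single_le_sum (f := fun j => 2 / C j j)
          (fun j _ => le_of_lt (div_pos two_pos (hCd j))) (Finset.mem_univ i)
      linarith
  -- maximizer on the box
  set K : Set (ι → ℝ) := Set.univ.pi fun _ => Set.Icc (0:ℝ) R with hKdef
  have hKc : IsCompact K := isCompact_univ_pi fun i => isCompact_Icc
  have hK0 : (fun _ : ι => (0:ℝ)) ∈ K := by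
    intro i _; exact ⟨le_refl 0, le_of_lt hR0⟩
  have hcont : Continuous fun lam : ι → ℝ => dualObj2 C lam := by
    unfold dualObj2
    apply Continuous.sub
    · exact continuous_finset_sum _ fun i _ => continuous_apply i
    · exact continuous_const.mul (continuous_finset_sum _ fun i _ =>
        continuous_finset_sum _ fun j _ =>
          ((continuous_apply i).mul continuous_const).mul (continuous_apply j))
  obtain ⟨lamh, hlamhK, hmax⟩ := hKc.exists_isMaxOn ⟨_, hK0⟩ hcont.continuousOn
  have hlamh0 : ∀ i, 0 ≤ lamh i := fun i => (hlamhK i (Set.mem_univ i)).1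
  have hlamhR : ∀ i, lamh i ≤ R := fun i => (hlamhK i (Set.mem_univ i)).2
  -- perturbation inequality
  have hpert : ∀ i t, 0 ≤ lamh i + t → lamh i + t ≤ R →
      t * (1 - (1/2) * ∑ j, C i j * lamh j) ≤ (1/4) * (t ^ 2 * C i i) := by
    intro i t h1 h2
    have hmem : (fun j => lamh j + (if j = i then t else 0)) ∈ K := by
      intro j _
      by_cases hj : j = i
      · subst hj; simp only [if_pos rfl]; exact ⟨h1, h2⟩
      · simp only [if_neg hj, add_zero]; exact hlamhK j (Set.mem_univ j)
    have hle : dualObj2 C (fun j => lamh j + (if j = i then t else 0))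
        ≤ dualObj2 C lamh := hmax hmem
    rw [expand_single C hsymm lamh i t] at hle
    linarith [hle]
  -- lamh i < R
  have hlt : ∀ i, lamh i < R := by
    intro i
    rcases lt_or_eq_of_le (hlamhR i) with h | h
    · exact h
    · exfalso
      set a : ℝ := 1 - (1/2) * ∑ j, C i j * lamh j with ha
      have hsum : C i i * R ≤ ∑ j, C i j * lamh j := by
        have h2 : C i i * lamh i ≤ ∑ j, C i j * lamh j := by
          exact Finset.single_le_sum (f := fun j => C i j * lamh j)
            (fun j _ => mul_nonneg (hCnn i j) (hlamh0 j)) (Finset.mem_univ i)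
        rwa [h] at h2
      have hCR : 2 < C i i * R := by
        have := hRbig i
        rw [div_lt_iff₀ (hCd i)] at this
        linarith
      have haneg : a < 0 := by rw [ha]; linarith
      set ε : ℝ := min R ((-a) / C i i) with hε
      have hε0 : 0 < ε := lt_min hR0 (div_pos (neg_pos.2 haneg) (hCd i))
      have hε2 : ε * C i i ≤ -a := by
        have := min_le_right R ((-a) / C i i)
        rw [← hε] at this
        exact (le_div_iff₀ (hCd i)).mp this
      have hεR : ε ≤ R := min_le_left _ _
      have hp := hpert i (-ε) (by rw [h]; linarith) (by rw [h]; linarith)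
      rw [← ha] at hp
      clear_value a ε
      nlinarith [mul_pos hε0 (neg_pos.2 haneg), mul_le_mul_of_nonneg_left hε2 hε0.le, hp]
  -- first-order condition: (C lamh)_i ≥ 2
  have hge2 : ∀ i, 2 ≤ ∑ j, C i j * lamh j := by
    intro i
    by_contra hcon
    push_neg at hcon
    set a : ℝ := 1 - (1/2) * ∑ j, C i j * lamh j with ha
    have hapos : 0 < a := by rw [ha]; linarith
    set ε : ℝ := min (R - lamh i) (a / C i i) with hε
    have hε0 : 0 < ε := lt_min (by linarith [hlt i]) (div_pos hapos (hCd i))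
    have hε2 : ε * C i i ≤ a := by
      have := min_le_right (R - lamh i) (a / C i i)
      rw [← hε] at this
      exact (le_div_iff₀ (hCd i)).mp this
    have hεR : ε ≤ R - lamh i := min_le_left _ _
    have hp := hpert i ε (by linarith [hlamh0 i]) (by linarith)
    rw [← ha] at hp
    clear_value a ε
    nlinarith [mul_pos hε0 hapos, mul_le_mul_of_nonneg_left hε2 hε0.le, hp]
  -- complementary slackness: lamh i > 0 → (C lamh)_i = 2
  have heq2 : ∀ i, 0 < lamh i → ∑ j, C i j * lamh j = 2 := by
    intro i hi
    refine le_antisymm ?_ (hge2 i)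
    by_contra hcon
    push_neg at hcon
    set a : ℝ := 1 - (1/2) * ∑ j, C i j * lamh j with ha
    have haneg : a < 0 := by rw [ha]; linarith
    set ε : ℝ := min (lamh i) ((-a) / C i i) with hε
    have hε0 : 0 < ε := lt_min hi (div_pos (neg_pos.2 haneg) (hCd i))
    have hε2 : ε * C i i ≤ -a := by
      have := min_le_right (lamh i) ((-a) / C i i)
      rw [← hε] at this
      exact (le_div_iff₀ (hCd i)).mp this
    have hεl : ε ≤ lamh i := min_le_left _ _
    have hp := hpert i (-ε) (by linarith) (by linarith [hlamhR i])
    rw [← ha] at hp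
    clear_value a ε
    nlinarith [mul_pos hε0 (neg_pos.2 haneg), mul_le_mul_of_nonneg_left hε2 hε0.le, hp]
  have hcompl : ∀ i, lamh i * (∑ j, C i j * lamh j) = 2 * lamh i := by
    intro i
    rcases eq_or_lt_of_le (hlamh0 i) with h | h
    · rw [← h]; ring
    · rw [heq2 i h]; ring
  -- value of Q at lamh
  have hQval : ∑ i, ∑ j, lamh i * C i j * lamh j = 2 * ∑ i, lamh i := by
    rw [Finset.mul_sum]
    refine Finset.sum_congr rfl fun i _ => ?_
    have : ∑ j, lamh i * C i j * lamh j = lamh i * ∑ j, C i j * lamh j := by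
      rw [Finset.mul_sum]
      exact Finset.sum_congr rfl fun j _ => by ring
    rw [this, hcompl i]
  have hdval : dualObj2 C lamh = (1/2) * ∑ i, lamh i := by
    unfold dualObj2; rw [hQval]; ring
  -- primal candidate
  set ρh : E → ℝ := fun e => (1/2) * ∑ i, lamh i * N i e with hρh
  have hρh0 : ∀ e, 0 ≤ ρh e := fun e =>
    mul_nonneg (by norm_num) (Finset.sum_nonneg fun i _ => mul_nonneg (hlamh0 i) (hN i e))
  have hρhf : ∀ i, 1 ≤ ∑ e, N i e * ρh e := by
    intro i
    have := Nrho N C hC lamh i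
    rw [hρh]
    rw [this]
    linarith [hge2 i]
  have hρhsq : ∑ e, ρh e ^ 2 = dualObj2 C lamh := by
    have h1 : ∑ e, ρh e ^ 2 = (1/4) * ∑ i, ∑ j, lamh i * C i j * lamh j := by
      rw [hQ_sq N C hC, Finset.mul_sum]
      exact Finset.sum_congr rfl fun e _ => by rw [hρh]; ring
    rw [h1, hQval, hdval]; ring
  -- upper bound: mod2 ≤ dualObj2 C lamh
  have hub : mod2On N (Set.univ : Set ι) ≤ dualObj2 C lamh := by
    rw [← hρhsq]
    exact csInf_le (hbdd _) ⟨ρh, hρh0, fun i _ => hρhf i, rfl⟩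
  -- lower bound (weak duality)
  have hlb : ∀ lam : ι → ℝ, (∀ i, 0 ≤ lam i) →
      dualObj2 C lam ≤ mod2On N (Set.univ : Set ι) := by
    intro lam hlam
    refine le_csInf (hne _) ?_
    rintro x ⟨ρ, h0, hf, rfl⟩
    exact wd N C hC lam ρ fun i =>
      le_mul_of_one_le_right (hlam i) (hf i (Set.mem_univ i))
  -- positivity of lamh via minimality
  have hpos : ∀ i, 0 < lamh i := by
    intro i0
    rcases eq_or_lt_of_le (hlamh0 i0) with h0 | h; swap
    · exact h
    exfalso
    have hsub : dualObj2 C lamh ≤ mod2On N (Set.univ \ {i0}) := by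
      refine le_csInf (hne _) ?_
      rintro x ⟨ρ, hρ0, hρf, rfl⟩
      refine wd N C hC lamh ρ fun i => ?_
      by_cases hi : i = i0
      · subst hi; rw [← h0]; ring_nf; exact le_refl _
      · exact le_mul_of_one_le_right (hlamh0 i)
          (hρf i ⟨Set.mem_univ i, by simp [hi]⟩)
    linarith [hmin i0, hub, hsub]
  -- C lamh = 2
  have hCl : ∀ i, (C *ᵥ lamh) i = 2 := by
    intro i
    simp only [Matrix.mulVec, dotProduct]
    exact heq2 i (hpos i)
  have hlameq : lamh = lamstar := by
    have h1 : lamh = C⁻¹ *ᵥ (C *ᵥ lamh) := by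
      rw [Matrix.mulVec_mulVec, Matrix.nonsing_inv_mul C hCinv, Matrix.one_mulVec]
    have h2 : (C *ᵥ lamh) = (2:ℝ) • (fun _ : ι => (1:ℝ)) := by
      funext i; rw [hCl i]; simp
    rw [hlamstar]
    funext i
    rw [h1, h2, Matrix.mulVec_smul]
    simp
  -- global maximality over the orthant
  have hglobal : ∀ lam : ι → ℝ, dualObj2 C lam ≤ dualObj2 C lamh := by
    intro lam
    have hfun : (fun i => lamh i + (lam i - lamh i)) = lam := funext fun i => by ring
    have hexp := expand C hsymm lamh (fun i => lam i - lamh i)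
    rw [hfun] at hexp
    have hmid : ∑ i, (lam i - lamh i) * (1 - (1/2) * ∑ j, C i j * lamh j) = 0 := by
      refine Finset.sum_eq_zero fun i _ => ?_
      rw [heq2 i (hpos i)]; ring
    have hQnn : 0 ≤ ∑ i, ∑ j, (lam i - lamh i) * C i j * (lam j - lamh j) := by
      rw [hQ_sq N C hC]
      exact Finset.sum_nonneg fun e _ => sq_nonneg _
    rw [hexp, hmid]
    linarith
  refine ⟨?_, ?_, ?_, ?_⟩
  · intro i; rw [← hlameq]; exact hlamh0 i
  · intro lam _; rw [← hlameq]; exact hglobal lam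
  · -- uniqueness
    intro lam hlam hlammax
    have e1 : dualObj2 C lamstar ≤ dualObj2 C lam :=
      hlammax lamstar (fun i => by rw [← hlameq]; exact hlamh0 i)
    have e2 : dualObj2 C lam ≤ dualObj2 C lamstar := by
      rw [← hlameq]; exact hglobal lam
    have heqv : dualObj2 C lam = dualObj2 C lamh := by
      rw [hlameq]; exact le_antisymm e2 e1
    set d : ι → ℝ := fun i => lam i - lamh i with hd
    have hfun : (fun i => lamh i + d i) = lam := funext fun i => by rw [hd]; ring
    have hexp := expand C hsymm lamh d
    rw [hfun] at hexp
    have hmid : ∑ i, d i * (1 - (1/2) * ∑ j, C i j * lamh j) = 0 := by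
      refine Finset.sum_eq_zero fun i _ => ?_
      rw [heq2 i (hpos i)]; ring
    have hQ0 : ∑ i, ∑ j, d i * C i j * d j = 0 := by
      rw [hexp, hmid] at heqv
      linarith
    have hNd : ∀ e, ∑ i, d i * N i e = 0 := by
      rw [hQ_sq N C hC] at hQ0
      intro e
      have := (Finset.sum_eq_zero_iff_of_nonneg (fun e _ => sq_nonneg
        (∑ i, d i * N i e))).mp hQ0 e (Finset.mem_univ e)
      exact pow_eq_zero_iff (by norm_num) |>.mp this
    have hCd0 : ∀ i, ∑ j, C i j * d j = 0 := by
      intro i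
      have := Nrho N C hC d i
      have hz : ∑ e, N i e * ((1/2) * ∑ j, d j * N j e) = 0 := by
        refine Finset.sum_eq_zero fun e _ => ?_
        rw [hNd e]
        ring
      rw [hz] at this
      linarith
    have hd0 : d = fun _ => 0 := by
      have h1 : C *ᵥ d = fun _ => 0 := by
        funext i
        simp only [Matrix.mulVec, dotProduct]
        exact hCd0 i
      have h2 : d = C⁻¹ *ᵥ (C *ᵥ d) := by
        rw [Matrix.mulVec_mulVec, Matrix.nonsing_inv_mul C hCinv, Matrix.one_mulVec]
      rw [h2, h1]
      funext i
      simp [Matrix.mulVec, dotProduct]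
    funext i
    have := congrFun hd0 i
    rw [hd] at this
    simp only at this
    rw [← hlameq]
    linarith
  · -- value of the modulus
    have hm : mod2On N (Set.univ : Set ι) = dualObj2 C lamh :=
      le_antisymm hub (hlb lamh hlamh0)
    rw [hm, hdval]
    have : ∀ i, lamh i = 2 * (C⁻¹ *ᵥ (fun _ => (1:ℝ))) i := by
      intro i; rw [hlameq, hlamstar]
    rw [Finset.mul_sum]
    refine Finset.sum_congr rfl fun i _ => ?_
    rw [this i]; ring
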